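/- For a finite simple graph G, the closed neighborhood ideal N_G equals the intersection, over all minimal dominating sets V' of G, of the ideals (V')R generated by the variables in V'. -/

import Mathlib

/-- `D` is a dominating set of the graph `G`: every vertex is in `D` or adjacent to a
vertex of `D`. -/
def IsDomSet {V : Type*} (G : SimpleGraph V) (D : Finset V) : Prop :=
  ∀ v : V, v ∈ D ∨ ∃ u ∈ D, G.Adj u v

/-- `D` is a minimal dominating set of `G`: it is dominating and properly contains no
dominating set. -/
def IsMinDomSet {V : Type*} (G : SimpleGraph V) (D : Finset V) : Prop :=
  IsDomSet G D ∧ ∀ D' ⊆ D, IsDomSet G D' → D' = D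

open scoped Classical in
/-- The closed neighborhood ideal of a finite simple graph `G`, generated in
`K[X_v : v ∈ V]` by the products of the variables in the closed neighborhoods of the
vertices. -/
noncomputable def nbhdIdeal {V : Type*} [Fintype V] (K : Type*) [Field K]
    (G : SimpleGraph V) : Ideal (MvPolynomial V K) :=
  Ideal.span { m | ∃ i : V,
    m = ∏ j ∈ (insert i {j | G.Adj i j} : Set V).toFinset, MvPolynomial.X j }

open scoped Classical

/-- Every dominating set contains a minimal dominating set. -/
lemma exists_min_dom_subset {V : Type*} (G : SimpleGraph V) :
    ∀ D : Finset V, IsDomSet G D → ∃ D' ⊆ D, IsMinDomSet G D' := by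
  intro D
  induction D using Finset.strongInductionOn with
  | _ D ih =>
    intro hD
    by_cases hmin : ∀ D' ⊆ D, IsDomSet G D' → D' = D
    · exact ⟨D, subset_rfl, hD, hmin⟩
    · push_neg at hmin
      obtain ⟨D', hsub, hdom, hne⟩ := hmin
      obtain ⟨D'', hsub'', hmin''⟩ := ih D' (lt_of_le_of_ne hsub hne) hdom
      exact ⟨D'', hsub''.trans hsub, hmin''⟩

lemma prod_X_eq_monomial {V : Type*} (K : Type*) [Field K] (F : Finset V) :
    (∏ j ∈ F, MvPolynomial.X j : MvPolynomial V K)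
      = MvPolynomial.monomial (∑ j ∈ F, Finsupp.single j 1) (1 : K) := by
  induction F using Finset.induction with
  | empty => simp [MvPolynomial.monomial_eq]
  | insert _ _ hx ih =>
    rw [Finset.prod_insert hx, Finset.sum_insert hx, ih, MvPolynomial.X,
      MvPolynomial.monomial_mul, one_mul]

lemma indicator_le_iff {V : Type*} (F : Finset V) (m : V →₀ ℕ) :
    (∑ j ∈ F, Finsupp.single j 1) ≤ m ↔ ∀ j ∈ F, m j ≠ 0 := by
  rw [Finsupp.le_def]
  constructor
  · intro h j hj
    have := h j
    rw [Finsupp.coe_finset_sum, Finset.sum_apply] at this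
    have hval : ∑ i ∈ F, (Finsupp.single i 1 : V →₀ ℕ) j = 1 := by
      rw [Finset.sum_eq_single j (fun b _ hb => Finsupp.single_eq_of_ne' hb)
        (fun hj' => absurd hj hj'), Finsupp.single_eq_same]
    rw [hval] at this
    omega
  · intro h k
    rw [Finsupp.coe_finset_sum, Finset.sum_apply]
    by_cases hk : k ∈ F
    · have hval : ∑ i ∈ F, (Finsupp.single i 1 : V →₀ ℕ) k = 1 := by
        rw [Finset.sum_eq_single k (fun b _ hb => Finsupp.single_eq_of_ne' hb)
          (fun hk' => absurd hk hk'), Finsupp.single_eq_same]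
      rw [hval]
      exact Nat.one_le_iff_ne_zero.mpr (h k hk)
    · have hval : ∑ i ∈ F, (Finsupp.single i 1 : V →₀ ℕ) k = 0 := by
        apply Finset.sum_eq_zero
        intro b hb
        exact Finsupp.single_eq_of_ne' (fun h' => hk (h' ▸ hb))
      rw [hval]
      exact Nat.zero_le _

/-- The key combinatorial fact. -/
lemma key {V : Type*} [Fintype V] (G : SimpleGraph V) (m : V →₀ ℕ) :
    (∀ D : Finset V, IsMinDomSet G D → ∃ i ∈ D, m i ≠ 0) ↔
      ∃ i : V, ∀ j ∈ (insert i {j | G.Adj i j} : Set V).toFinset, m j ≠ 0 := by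
  constructor
  · intro h
    by_contra hc
    push_neg at hc
    set T : Finset V := Finset.univ.filter (fun v => m v = 0) with hT
    have hTdom : IsDomSet G T := by
      intro v
      obtain ⟨j, hj, hmj⟩ := hc v
      rw [Set.mem_toFinset, Set.mem_insert_iff] at hj
      have hjT : j ∈ T := by simp [hT, hmj]
      rcases hj with rfl | hadj
      · exact Or.inl hjT
      · exact Or.inr ⟨j, hjT, (G.adj_symm hadj)⟩
    obtain ⟨D, hDsub, hDmin⟩ := exists_min_dom_subset G T hTdom
    obtain ⟨i, hiD, hmi⟩ := h D hDmin
    have : m i = 0 := by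
      have := hDsub hiD
      simpa [hT] using this
    exact hmi this
  · rintro ⟨i, hi⟩ D hD
    rcases hD.1 i with hiD | ⟨u, huD, hadj⟩
    · exact ⟨i, hiD, hi i (by simp)⟩
    · exact ⟨u, huD, hi u (by simp [hadj, G.adj_symm hadj])⟩

/-- The closed neighborhood ideal `N_G` is the intersection, over all minimal
dominating sets `D` of `G`, of the ideals generated by the variables indexed by `D`. -/
theorem stmt2 {V : Type*} [Fintype V] (K : Type*) [Field K] (G : SimpleGraph V) :
    nbhdIdeal K G = ⨅ (D : Finset V) (_ : IsMinDomSet G D),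
      Ideal.span (MvPolynomial.X '' (D : Set V)) := by
  have hgen : { m : MvPolynomial V K | ∃ i : V,
      m = ∏ j ∈ (insert i {j | G.Adj i j} : Set V).toFinset, MvPolynomial.X j }
      = (fun s => MvPolynomial.monomial s (1 : K)) ''
        { e | ∃ i : V, e = ∑ j ∈ (insert i {j | G.Adj i j} : Set V).toFinset,
          Finsupp.single j 1 } := by
    ext p
    constructor
    · rintro ⟨i, rfl⟩
      exact ⟨_, ⟨i, rfl⟩, (prod_X_eq_monomial K _).symm⟩
    · rintro ⟨e, ⟨i, rfl⟩, rfl⟩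
      exact ⟨i, (prod_X_eq_monomial K _).symm⟩
  ext p
  rw [nbhdIdeal, hgen, MvPolynomial.mem_ideal_span_monomial_image]
  simp only [Ideal.mem_iInf, MvPolynomial.mem_ideal_span_X_image]
  constructor
  · intro h D hD q hq
    obtain ⟨si, ⟨i, rfl⟩, hle⟩ := h q hq
    rw [indicator_le_iff] at hle
    obtain ⟨u, huD, hqu⟩ := (key G q).mpr ⟨i, hle⟩ D hD
    exact ⟨u, by simpa using huD, hqu⟩
  · intro h q hq
    have : ∀ D : Finset V, IsMinDomSet G D → ∃ i ∈ D, q i ≠ 0 := by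
      intro D hD
      obtain ⟨u, huD, hqu⟩ := h D hD q hq
      exact ⟨u, by simpa using huD, hqu⟩
    obtain ⟨i, hi⟩ := (key G q).mp this
    exact ⟨_, ⟨i, rfl⟩, (indicator_le_iff _ q).mpr hi⟩
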